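/- The scheme from equation (7) of the paper, C : Fin 3 → Fin 4 → ℕ with rows (1,1,0,0), (0,1,1,0), (0,0,1,2), is valid for 4 mints with 3 weighings, and its cost is 1+1+1+2 = 5. -/

import Mathlib

/-- Excess-weight vector of state `d` under scheme `C`. -/
def vvec {W M : ℕ} (C : Fin W → Fin M → ℕ) (d : Fin M → Bool) : Fin W → ℕ :=
  fun w => ∑ m, C w m * (if d m then 1 else 0)

/-- A scheme is valid when excess vectors of distinct states are never
positive rational multiples of each other. -/
def ValidScheme {W M : ℕ} (C : Fin W → Fin M → ℕ) : Prop :=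
  ∀ d d' : Fin M → Bool, d ≠ d' →
    ¬ ∃ q : ℚ, 0 < q ∧
      (fun w => (vvec C d' w : ℚ)) = q • (fun w => (vvec C d w : ℚ))

/-- Total number of coins needed: each mint supplies its column maximum. -/
def cost {W M : ℕ} (C : Fin W → Fin M → ℕ) : ℕ :=
  ∑ m, Finset.univ.sup fun w => C w m

lemma mult_iff {W : ℕ} (u v : Fin W → ℕ) :
    (∃ q : ℚ, 0 < q ∧ (fun w => (v w : ℚ)) = q • (fun w => (u w : ℚ))) ↔
    ((∀ w, u w = 0) ∧ (∀ w, v w = 0)) ∨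
      (∃ w0, u w0 ≠ 0 ∧ v w0 ≠ 0 ∧ ∀ w, v w * u w0 = v w0 * u w) := by
  constructor
  · rintro ⟨q, hq, h⟩
    have h' : ∀ w, (v w : ℚ) = q * u w := fun w => congrFun h w
    by_cases hu : ∀ w, u w = 0
    · left
      refine ⟨hu, fun w => ?_⟩
      have := h' w
      rw [hu w] at this
      exact_mod_cast by simpa using this
    · right
      push_neg at hu
      obtain ⟨w0, hw0⟩ := hu
      refine ⟨w0, hw0, ?_, fun w => ?_⟩
      · intro hv
        have := h' w0
        rw [hv] at this
        have : q * (u w0 : ℚ) = 0 := by exact_mod_cast this.symm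
        rcases mul_eq_zero.mp this with h1 | h1
        · exact hq.ne' h1
        · exact hw0 (by exact_mod_cast h1)
      · have e1 := h' w
        have e2 := h' w0
        have : (v w : ℚ) * u w0 = (v w0 : ℚ) * u w := by
          rw [e1, e2]; ring
        exact_mod_cast this
  · rintro (⟨hu, hv⟩ | ⟨w0, hu0, hv0, h⟩)
    · exact ⟨1, one_pos, by funext w; simp [hu w, hv w]⟩
    · refine ⟨(v w0 : ℚ) / (u w0 : ℚ), ?_, ?_⟩
      · apply div_pos <;> exact_mod_cast Nat.pos_of_ne_zero ‹_›
      · funext w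
        have hne : (u w0 : ℚ) ≠ 0 := Nat.cast_ne_zero.mpr hu0
        have : (v w : ℚ) * u w0 = (v w0 : ℚ) * u w := by exact_mod_cast h w
        simp only [Pi.smul_apply, smul_eq_mul]
        field_simp
        linarith [this]

theorem stmt_15 :
    ValidScheme ![![1, 1, 0, 0], ![0, 1, 1, 0], ![0, 0, 1, 2]] ∧
    cost ![![1, 1, 0, 0], ![0, 1, 1, 0], ![0, 0, 1, 2]] = 5 := by
  constructor
  · intro d d' hne
    rw [mult_iff]
    revert hne
    revert d d'
    decide
  · decide
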